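/- Let β > 0, let n ≥ 1, and let w_i, y_i, b_i ∈ [0,1] for i = 1, …, n. If ∑_{i=1}^n σ_β(w_i − y_i) ≥ n/2 and ∑_{i=1}^n σ_β(y_i − b_i) ≥ n/2, then (β/2) · ∑_{i=1}^n w_i ≥ (∑_{i=1}^n b_i − ∑_{i=1}^n y_i) · (1 − exp(−β))/(1 + exp(−β)). -/

import Mathlib

noncomputable def sigma (β t : ℝ) : ℝ := 1 / (1 + Real.exp (-(β * t)))

open Real in
private lemma tanh_aux (r : ℝ) (hr : 0 ≤ r) :
    Real.exp r - Real.exp (-r) ≤ r * (Real.exp r + Real.exp (-r)) := by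
  set g : ℝ → ℝ := fun x => x * (Real.exp x + Real.exp (-x)) - (Real.exp x - Real.exp (-x)) with hg
  have hd : ∀ x : ℝ, HasDerivAt g (x * (Real.exp x - Real.exp (-x))) x := by
    intro x
    have h1 : HasDerivAt (fun r : ℝ => Real.exp r) (Real.exp x) x := Real.hasDerivAt_exp x
    have h2 : HasDerivAt (fun r : ℝ => Real.exp (-r)) (-Real.exp (-x)) x := by
      convert (hasDerivAt_neg x).exp using 1; ring
    have := ((hasDerivAt_id x).mul (h1.add h2)).sub (h1.sub h2)
    refine this.congr_deriv ?_
    simp only [id_eq, Pi.add_apply]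
    ring
  have mono : Monotone g := by
    apply monotone_of_deriv_nonneg
    · exact fun x => (hd x).differentiableAt
    · intro x
      rw [(hd x).deriv]
      rcases le_total 0 x with h | h
      · have : Real.exp (-x) ≤ Real.exp x := Real.exp_le_exp.2 (by linarith)
        nlinarith
      · have : Real.exp x ≤ Real.exp (-x) := Real.exp_le_exp.2 (by linarith)
        nlinarith
  have h0 : g 0 = 0 := by simp [hg]
  have := mono hr
  rw [h0] at this
  simp only [hg] at this
  linarith

private lemma sigma_zero (β : ℝ) : sigma β 0 = 1/2 := by
  simp [sigma]
  norm_num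

private lemma sigma_mono (β : ℝ) (hβ : 0 < β) {t s : ℝ} (hts : t ≤ s) :
    sigma β t ≤ sigma β s := by
  rw [sigma, sigma]
  have h1 : Real.exp (-(β*s)) ≤ Real.exp (-(β*t)) := Real.exp_le_exp.2 (by nlinarith)
  have h2 := Real.exp_pos (-(β*s))
  exact one_div_le_one_div_of_le (by linarith) (by linarith)

private lemma sigma_neg (β t : ℝ) : sigma β (-t) = 1 - sigma β t := by
  rw [sigma, sigma]
  have h := Real.exp_pos (-(β*t))
  rw [show -(β * -t) = -(-(β*t)) by ring, Real.exp_neg]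
  field_simp
  ring

private lemma sigma_lip_same (β : ℝ) (hβ : 0 < β) {t s : ℝ} (hts : t ≤ s)
    (hsign : 0 ≤ t ∨ s ≤ 0) :
    sigma β s - sigma β t ≤ β / 4 * (s - t) := by
  set X := Real.exp (-(β * s)) with hXdef
  set Y := Real.exp (-(β * t)) with hYdef
  have hX : 0 < X := Real.exp_pos _
  have hY : 0 < Y := Real.exp_pos _
  have hXY : X ≤ Y := Real.exp_le_exp.2 (by nlinarith)
  set r := β * (s - t) / 2 with hrdef
  have hr : 0 ≤ r := by nlinarith
  have hM : Y = Real.exp (-(β*(s+t)/2)) * Real.exp r := by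
    rw [hYdef, ← Real.exp_add, hrdef]; ring_nf
  have hMX : X = Real.exp (-(β*(s+t)/2)) * Real.exp (-r) := by
    rw [hXdef, ← Real.exp_add, hrdef]; ring_nf
  have hT := tanh_aux r hr
  have key : Y - X ≤ r * (X + Y) := by
    rw [hM, hMX]; nlinarith [Real.exp_pos (-(β*(s+t)/2))]
  have hsgn : (1 - X) * (1 - Y) ≥ 0 := by
    rcases hsign with h | h
    · have hY1 : Y ≤ 1 := Real.exp_le_one_iff.2 (by nlinarith)
      have hX1 : X ≤ 1 := le_trans hXY hY1
      nlinarith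
    · have hX1 : 1 ≤ X := Real.one_le_exp_iff.2 (by nlinarith)
      have hY1 : 1 ≤ Y := le_trans hX1 hXY
      nlinarith
  have h1X : 0 < 1 + X := by linarith
  have h1Y : 0 < 1 + Y := by linarith
  have expand : sigma β s - sigma β t = (Y - X)/((1+X)*(1+Y)) := by
    rw [sigma, sigma]
    field_simp
    rw [← hXdef, ← hYdef]; ring
  rw [expand, div_le_iff₀ (by positivity)]
  have h2 : 2*(X+Y) ≤ (1+X)*(1+Y) := by nlinarith
  nlinarith [mul_nonneg hr (by nlinarith : (0:ℝ) ≤ (1+X)*(1+Y) - 2*(X+Y))]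

private lemma sigma_lip (β : ℝ) (hβ : 0 < β) {t s : ℝ} (hts : t ≤ s) :
    sigma β s - sigma β t ≤ β / 4 * (s - t) := by
  rcases le_or_gt 0 t with h | h
  · exact sigma_lip_same β hβ hts (Or.inl h)
  rcases le_or_gt s 0 with h' | h'
  · exact sigma_lip_same β hβ hts (Or.inr h')
  have hA := sigma_lip_same β hβ (le_of_lt h') (Or.inl le_rfl)
  have hB := sigma_lip_same β hβ (le_of_lt h) (Or.inr le_rfl)
  rw [sigma_zero] at hA hB
  linarith

private lemma sigma_chord (β : ℝ) (hβ : 0 < β) {u : ℝ} (hu0 : 0 ≤ u) (hu1 : u ≤ 1) :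
    sigma β (-u) ≤ 1/2 - u/2 * ((1 - Real.exp (-β)) / (1 + Real.exp (-β))) := by
  set f : ℝ → ℝ := fun v => (1 + Real.exp (β * v))⁻¹ with hf
  have hepos : ∀ x : ℝ, (0:ℝ) < 1 + Real.exp (β * x) := fun x => by positivity
  have he : ∀ x : ℝ, HasDerivAt (fun v => Real.exp (β * v)) (β * Real.exp (β * x)) x := by
    intro x
    have h2 : HasDerivAt (fun y : ℝ => β * y) (β * 1) x := (hasDerivAt_id x).const_mul β
    convert h2.exp using 1; ring
  have hden : ∀ x : ℝ, HasDerivAt (fun v => 1 + Real.exp (β * v)) (β * Real.exp (β * x)) x :=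
    fun x => (he x).const_add 1
  have hf' : ∀ x : ℝ, HasDerivAt f
      (-(β * Real.exp (β*x)) / (1 + Real.exp (β*x))^2) x :=
    fun x => (hden x).inv (hepos x).ne'
  have hf'' : ∀ x : ℝ, HasDerivAt (fun v => -(β * Real.exp (β*v)) / (1 + Real.exp (β*v))^2)
      ((β^2 * Real.exp (β*x) * (Real.exp (β*x) - 1)) / (1 + Real.exp (β*x))^3) x := by
    intro x
    have hnum : HasDerivAt (fun v => -(β * Real.exp (β*v))) (-(β * (β * Real.exp (β*x)))) x :=
      ((he x).const_mul β).neg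
    have hd2 : HasDerivAt (fun v => (1 + Real.exp (β*v))^2)
        ((2:ℕ) * (1 + Real.exp (β*x))^1 * (β * Real.exp (β*x))) x := (hden x).pow 2
    have := hnum.div hd2 (by positivity)
    refine this.congr_deriv ?_
    have h := (hepos x).ne'
    rw [div_eq_div_iff (by positivity) (by positivity)]; push_cast; ring
  have hcx : ConvexOn ℝ (Set.Ici (0:ℝ)) f := by
    apply convexOn_of_hasDerivWithinAt2_nonneg (convex_Ici 0)
      (f' := fun v => -(β * Real.exp (β*v)) / (1 + Real.exp (β*v))^2)
      (f'' := fun v => (β^2 * Real.exp (β*v) * (Real.exp (β*v) - 1)) / (1 + Real.exp (β*v))^3)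
    · exact fun x _ => ((hf' x).continuousAt).continuousWithinAt
    · exact fun x _ => (hf' x).hasDerivWithinAt
    · exact fun x _ => (hf'' x).hasDerivWithinAt
    · intro x hx
      rw [interior_Ici] at hx
      have h1 : (1:ℝ) ≤ Real.exp (β*x) := Real.one_le_exp (by nlinarith [Set.mem_Ioi.1 hx])
      exact div_nonneg (mul_nonneg (by positivity) (by linarith)) (by positivity)
  have key := hcx.2 (Set.self_mem_Ici) (by simp : (1:ℝ) ∈ Set.Ici (0:ℝ))
    (by linarith : (0:ℝ) ≤ 1 - u) hu0 (by ring)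
  simp only [smul_eq_mul, mul_zero, mul_one, zero_add] at key
  have hσ : sigma β (-u) = f u := by
    rw [sigma, hf, one_div, show -(β * -u) = β * u by ring]
  rw [hσ]
  have hf0 : f 0 = 1/2 := by rw [hf]; norm_num
  have hf1 : f 1 = (1 + Real.exp β)⁻¹ := by rw [hf]; norm_num
  rw [hf0, hf1] at key
  refine le_trans key (le_of_eq ?_)
  rw [Real.exp_neg]
  have h := (Real.exp_pos β).ne'
  field_simp
  ring

private lemma per_point (β : ℝ) (hβ : 0 < β) {wi yi bi : ℝ}
    (hw : wi ∈ Set.Icc (0:ℝ) 1) (hy : yi ∈ Set.Icc (0:ℝ) 1) (hb : bi ∈ Set.Icc (0:ℝ) 1) :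
    sigma β (wi - yi) + sigma β (yi - bi) ≤
      1 + β/4 * wi + (yi - bi)/2 * ((1 - Real.exp (-β)) / (1 + Real.exp (-β))) := by
  obtain ⟨hw0, hw1⟩ := hw
  obtain ⟨hy0, hy1⟩ := hy
  obtain ⟨hb0, hb1⟩ := hb
  set c := (1 - Real.exp (-β)) / (1 + Real.exp (-β)) with hc
  have hcnn : 0 ≤ c := by
    rw [hc]
    apply div_nonneg
    · have := Real.exp_le_one_iff.2 (by linarith : -β ≤ 0); linarith
    · have := Real.exp_pos (-β); linarith
  have hA : sigma β (wi - yi) ≤ sigma β (-yi) + β/4 * wi := by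
    have h := sigma_lip β hβ (show -yi ≤ wi - yi by linarith)
    have e : wi - yi - -yi = wi := by ring
    rw [e] at h
    linarith
  have hB : sigma β (yi - bi) ≤ sigma β yi + (yi - bi)/2 * c := by
    rcases le_total bi yi with h | h
    · have h1 := sigma_mono β hβ (show yi - bi ≤ yi by linarith)
      nlinarith
    · have h1 := sigma_chord β hβ (show (0:ℝ) ≤ bi - yi by linarith) (by linarith)
      have h2 : sigma β 0 ≤ sigma β yi := sigma_mono β hβ hy0
      rw [sigma_zero] at h2
      rw [show yi - bi = -(bi - yi) by ring]
      rw [← hc] at h1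
      nlinarith
  have hs := sigma_neg β yi
  linarith

theorem copeland_core_inequality (β : ℝ) (hβ : 0 < β) (n : ℕ) (hn : 1 ≤ n)
    (w y b : Fin n → ℝ)
    (hw : ∀ i, w i ∈ Set.Icc (0:ℝ) 1)
    (hy : ∀ i, y i ∈ Set.Icc (0:ℝ) 1)
    (hb : ∀ i, b i ∈ Set.Icc (0:ℝ) 1)
    (h1 : ∑ i, sigma β (w i - y i) ≥ (n : ℝ) / 2)
    (h2 : ∑ i, sigma β (y i - b i) ≥ (n : ℝ) / 2) :
    (β / 2) * ∑ i, w i ≥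
      (∑ i, b i - ∑ i, y i) * ((1 - Real.exp (-β)) / (1 + Real.exp (-β))) := by
  set c := (1 - Real.exp (-β)) / (1 + Real.exp (-β)) with hc
  have hsum : (n:ℝ) ≤ ∑ i, (1 + β/4 * w i + (y i - b i)/2 * c) := by
    calc (n:ℝ) = n/2 + n/2 := by ring
    _ ≤ (∑ i, sigma β (w i - y i)) + ∑ i, sigma β (y i - b i) := by linarith
    _ = ∑ i, (sigma β (w i - y i) + sigma β (y i - b i)) := Finset.sum_add_distrib.symm
    _ ≤ ∑ i, (1 + β/4 * w i + (y i - b i)/2 * c) :=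
        Finset.sum_le_sum (fun i _ => per_point β hβ (hw i) (hy i) (hb i))
  have expand : ∑ i, (1 + β/4 * w i + (y i - b i)/2 * c)
      = (n:ℝ) + β/4 * (∑ i, w i) + ((∑ i, y i) - ∑ i, b i)/2 * c := by
    rw [Finset.sum_add_distrib, Finset.sum_add_distrib, Finset.sum_const, Finset.card_univ,
      Fintype.card_fin, ← Finset.mul_sum, ← Finset.sum_mul, ← Finset.sum_div,
      Finset.sum_sub_distrib]
    simp
  rw [expand] at hsum
  nlinarith [hsum]
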